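/- For every t ≥ 0 and every finite sequence k₁,…,k_t ∈ {0,…,M−1}, there exist nonnegative real numbers λ₀,…,λ_M with Σ_{i=0}^{M} λ_i = 1 such that P_{k_t} P_{k_{t−1}} ⋯ P_{k_1} v₀ = Σ_{i=0}^{M} λ_i v_i; i.e., any product of the update matrices applied to the initial law v₀ (the point mass at 0) is a convex combination of the vectors v₀,…,v_M. -/

import Mathlib

open Matrix

/-- The vector `v_j ∈ ℝ^{M+1}`: the law of `min(j, G)` for `G ~ Geo(q)`. -/
noncomputable def sixV (q : ℝ) (M : ℕ) (j : Fin (M + 1)) : Fin (M + 1) → ℝ :=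
  fun k =>
    if (k : ℕ) < (j : ℕ) then (1 - q) * q ^ (k : ℕ)
    else if (k : ℕ) = (j : ℕ) then q ^ (j : ℕ)
    else 0

/-- The update matrix `P_k`, equal to the identity except in rows/columns `k, k+1`. -/
noncomputable def sixP (b₁ b₂ : ℝ) (M : ℕ) (k : Fin M) :
    Matrix (Fin (M + 1)) (Fin (M + 1)) ℝ :=
  fun i j =>
    if i = k.castSucc ∧ j = k.castSucc then 1 - b₁
    else if i = k.castSucc ∧ j = k.succ then b₂
    else if i = k.succ ∧ j = k.castSucc then b₁
    else if i = k.succ ∧ j = k.succ then 1 - b₂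
    else if i = j then 1 else 0

/-- Coefficients expressing `P_k v_i` as a combination of the `v_m`. -/
noncomputable def sixC (b₁ b₂ : ℝ) (M : ℕ) (k : Fin M) (i m : Fin (M + 1)) : ℝ :=
  if i = k.castSucc then (if m = k.castSucc then 1 - b₂ else if m = k.succ then b₂ else 0)
  else if i = k.succ then (if m = k.castSucc then b₁ else if m = k.succ then 1 - b₁ else 0)
  else (if m = i then 1 else 0)

lemma six_sum_two {n : ℕ} {a b : Fin n} (hab : a ≠ b) (x y : ℝ) :
    ∑ m, (if m = a then x else if m = b then y else 0) = x + y := by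
  have h : ∀ m : Fin n, (if m = a then x else if m = b then y else 0) =
      (if m = a then x else 0) + (if m = b then y else 0) := by
    intro m
    by_cases h1 : m = a
    · subst h1; simp [hab]
    · by_cases h2 : m = b <;> simp [h1, h2, Ne.symm hab]
  simp only [h, Finset.sum_add_distrib, Finset.sum_ite_eq', Finset.mem_univ, if_true]

lemma six_sum_two_smul {n : ℕ} {a b : Fin n} (hab : a ≠ b) (v : Fin n → (Fin n → ℝ))
    (x y : ℝ) :
    ∑ m, (if m = a then x else if m = b then y else 0) • v m = x • v a + y • v b := by
  have h : ∀ m : Fin n, (if m = a then x else if m = b then y else 0) • v m =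
      (if m = a then x • v a else 0) + (if m = b then y • v b else 0) := by
    intro m
    by_cases h1 : m = a
    · subst h1; simp [hab]
    · by_cases h2 : m = b
      · subst h2; simp [h1]
      · simp [h1, h2]
  simp only [h, Finset.sum_add_distrib, Finset.sum_ite_eq', Finset.mem_univ, if_true]

lemma six_sum_single_smul {n : ℕ} {a : Fin n} (v : Fin n → (Fin n → ℝ)) :
    ∑ m, (if m = a then (1:ℝ) else 0) • v m = v a := by
  have h : ∀ m : Fin n, (if m = a then (1:ℝ) else 0) • v m =
      (if m = a then v a else 0) := by
    intro m
    by_cases h1 : m = a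
    · subst h1; simp
    · simp [h1]
  simp only [h, Finset.sum_ite_eq', Finset.mem_univ, if_true]

lemma six_castSucc_ne_succ {M : ℕ} (k : Fin M) :
    (k.castSucc : Fin (M + 1)) ≠ k.succ := (Fin.castSucc_lt_succ : (k.castSucc : Fin (M + 1)) < k.succ).ne

lemma sixP_mulVec (b₁ b₂ : ℝ) (M : ℕ) (k : Fin M) (w : Fin (M + 1) → ℝ) (i : Fin (M + 1)) :
    (sixP b₁ b₂ M k).mulVec w i =
      if i = k.castSucc then (1 - b₁) * w k.castSucc + b₂ * w k.succ
      else if i = k.succ then b₁ * w k.castSucc + (1 - b₂) * w k.succ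
      else w i := by
  have hne := six_castSucc_ne_succ k
  by_cases h1 : i = k.castSucc
  · subst h1
    simp only [if_pos rfl]
    have h : ∀ j : Fin (M + 1), sixP b₁ b₂ M k k.castSucc j * w j =
        (if j = k.castSucc then (1 - b₁) * w k.castSucc else 0) +
        (if j = k.succ then b₂ * w k.succ else 0) := by
      intro j
      by_cases hj1 : j = k.castSucc
      · subst hj1; simp [sixP, hne]
      · by_cases hj2 : j = k.succ
        · subst hj2; simp [sixP, hne, hne.symm]
        · simp [sixP, hj1, hj2, Ne.symm hj1]
    simp only [Matrix.mulVec, dotProduct, h, Finset.sum_add_distrib,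
      Finset.sum_ite_eq', Finset.mem_univ, if_true]
  · by_cases h2 : i = k.succ
    · subst h2
      simp only [if_neg h1, if_pos rfl]
      have h : ∀ j : Fin (M + 1), sixP b₁ b₂ M k k.succ j * w j =
          (if j = k.castSucc then b₁ * w k.castSucc else 0) +
          (if j = k.succ then (1 - b₂) * w k.succ else 0) := by
        intro j
        by_cases hj1 : j = k.castSucc
        · subst hj1; simp [sixP, hne, hne.symm]
        · by_cases hj2 : j = k.succ
          · subst hj2; simp [sixP, hne, hne.symm]
          · simp [sixP, hj1, hj2, Ne.symm hj2]
      simp only [Matrix.mulVec, dotProduct, h, Finset.sum_add_distrib,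
        Finset.sum_ite_eq', Finset.mem_univ, if_true]
    · simp only [if_neg h1, if_neg h2]
      have h : ∀ j : Fin (M + 1), sixP b₁ b₂ M k i j * w j =
          (if j = i then w i else 0) := by
        intro j
        by_cases hj : j = i
        · subst hj; simp [sixP, h1, h2]
        · have : ¬ i = j := fun hc => hj hc.symm
          by_cases hj1 : j = k.castSucc <;> by_cases hj2 : j = k.succ <;>
            simp_all [sixP]
      simp only [Matrix.mulVec, dotProduct, h, Finset.sum_ite_eq',
        Finset.mem_univ, if_true]

set_option maxHeartbeats 1600000 in
lemma sixStepV (b₁ b₂ q : ℝ) (hb₁ : 0 < b₁) (hb₁₂ : b₁ < b₂) (hb₂ : b₂ < 1)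
    (hq : q = b₁ / b₂) (M : ℕ) (k : Fin M) (i : Fin (M + 1)) :
    (sixP b₁ b₂ M k).mulVec (sixV q M i) = ∑ m, sixC b₁ b₂ M k i m • sixV q M m := by
  have hb₂0 : b₂ ≠ 0 := by linarith
  have hne := six_castSucc_ne_succ k
  have hkc : ((k.castSucc : Fin (M + 1)) : ℕ) = (k : ℕ) := rfl
  have hks : ((k.succ : Fin (M + 1)) : ℕ) = (k : ℕ) + 1 := rfl
  subst hq
  by_cases h1 : i = k.castSucc
  · subst h1
    rw [show (fun m => sixC b₁ b₂ M k k.castSucc m • sixV (b₁ / b₂) M m) =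
        (fun m => (if m = k.castSucc then 1 - b₂ else if m = k.succ then b₂ else 0) •
          sixV (b₁ / b₂) M m) from by funext m; simp [sixC],
      six_sum_two_smul hne]
    funext j
    rw [sixP_mulVec]
    by_cases hj1 : j = k.castSucc
    · subst hj1
      simp only [if_pos rfl, Pi.add_apply, Pi.smul_apply, smul_eq_mul, sixV, hkc, hks]
      split_ifs <;> first
        | (exfalso; omega)
        | (simp only [pow_succ]; field_simp; ring; done) | (field_simp; try ring; done) | ring | (simp; done)
    · by_cases hj2 : j = k.succ
      · subst hj2
        simp only [if_neg hj1, if_pos rfl, Pi.add_apply, Pi.smul_apply, smul_eq_mul,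
          sixV, hkc, hks]
        split_ifs <;> first
          | (exfalso; omega)
          | (simp only [pow_succ]; field_simp; ring; done) | (field_simp; try ring; done) | ring | (simp; done)
      · have hjc : (j : ℕ) ≠ (k : ℕ) := fun h => hj1 (Fin.ext h)
        have hjs : (j : ℕ) ≠ (k : ℕ) + 1 := fun h => hj2 (Fin.ext h)
        simp only [if_neg hj1, if_neg hj2, Pi.add_apply, Pi.smul_apply, smul_eq_mul,
          sixV, hkc, hks]
        split_ifs <;> first
          | (exfalso; omega)
          | (simp only [pow_succ]; field_simp; ring; done) | (field_simp; try ring; done) | ring | (simp; done)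
  · by_cases h2 : i = k.succ
    · subst h2
      rw [show (fun m => sixC b₁ b₂ M k k.succ m • sixV (b₁ / b₂) M m) =
          (fun m => (if m = k.castSucc then b₁ else if m = k.succ then 1 - b₁ else 0) •
            sixV (b₁ / b₂) M m) from by funext m; simp [sixC, hne.symm],
        six_sum_two_smul hne]
      funext j
      rw [sixP_mulVec]
      by_cases hj1 : j = k.castSucc
      · subst hj1
        simp only [if_pos rfl, Pi.add_apply, Pi.smul_apply, smul_eq_mul, sixV, hkc, hks]
        split_ifs <;> first
          | (exfalso; omega)
          | (simp only [pow_succ]; field_simp; ring; done) | (field_simp; try ring; done) | ring | (simp; done)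
      · by_cases hj2 : j = k.succ
        · subst hj2
          simp only [if_neg hj1, if_pos rfl, Pi.add_apply, Pi.smul_apply, smul_eq_mul,
            sixV, hkc, hks]
          split_ifs <;> first
            | (exfalso; omega)
            | (simp only [pow_succ]; field_simp; ring; done) | (field_simp; try ring; done) | ring | (simp; done)
        · have hjc : (j : ℕ) ≠ (k : ℕ) := fun h => hj1 (Fin.ext h)
          have hjs : (j : ℕ) ≠ (k : ℕ) + 1 := fun h => hj2 (Fin.ext h)
          simp only [if_neg hj1, if_neg hj2, Pi.add_apply, Pi.smul_apply, smul_eq_mul,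
            sixV, hkc, hks]
          split_ifs <;> first
            | (exfalso; omega)
            | (simp only [pow_succ]; field_simp; ring; done) | (field_simp; try ring; done) | ring | (simp; done)
    · rw [show (fun m => sixC b₁ b₂ M k i m • sixV (b₁ / b₂) M m) =
          (fun m => (if m = i then (1:ℝ) else 0) • sixV (b₁ / b₂) M m) from by
            funext m; simp [sixC, h1, h2],
        six_sum_single_smul]
      funext j
      rw [sixP_mulVec]
      have hic : (i : ℕ) ≠ (k : ℕ) := fun h => h1 (Fin.ext h)
      have his : (i : ℕ) ≠ (k : ℕ) + 1 := fun h => h2 (Fin.ext h)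
      by_cases hj1 : j = k.castSucc
      · subst hj1
        simp only [if_pos rfl, sixV, hkc, hks]
        split_ifs <;> first
          | (exfalso; omega)
          | (simp only [pow_succ]; field_simp; ring; done) | (field_simp; try ring; done) | ring | (simp; done)
      · by_cases hj2 : j = k.succ
        · subst hj2
          simp only [if_neg hj1, if_pos rfl, sixV, hkc, hks]
          split_ifs <;> first
            | (exfalso; omega)
            | (simp only [pow_succ]; field_simp; ring; done) | (field_simp; try ring; done) | ring | (simp; done)
        · simp [hj1, hj2]

lemma sixC_nonneg (b₁ b₂ : ℝ) (hb₁ : 0 < b₁) (hb₁₂ : b₁ < b₂) (hb₂ : b₂ < 1)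
    (M : ℕ) (k : Fin M) (i m : Fin (M + 1)) : 0 ≤ sixC b₁ b₂ M k i m := by
  unfold sixC
  split_ifs <;> linarith

lemma sixC_sum (b₁ b₂ : ℝ) (M : ℕ) (k : Fin M) (i : Fin (M + 1)) :
    ∑ m, sixC b₁ b₂ M k i m = 1 := by
  have hne := six_castSucc_ne_succ k
  by_cases h1 : i = k.castSucc
  · subst h1
    rw [show (fun m => sixC b₁ b₂ M k k.castSucc m) =
        (fun m => if m = k.castSucc then 1 - b₂ else if m = k.succ then b₂ else 0) from by
          funext m; simp [sixC]]
    rw [six_sum_two hne]; ring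
  · by_cases h2 : i = k.succ
    · subst h2
      rw [show (fun m => sixC b₁ b₂ M k k.succ m) =
          (fun m => if m = k.castSucc then b₁ else if m = k.succ then 1 - b₁ else 0) from by
            funext m; simp [sixC, hne.symm]]
      rw [six_sum_two hne]; ring
    · rw [show (fun m => sixC b₁ b₂ M k i m) =
          (fun m => if m = i then (1:ℝ) else 0) from by
            funext m; simp [sixC, h1, h2]]
      simp

/-- Any product of update matrices applied to the point mass at `0` is a convex
combination of the vectors `v₀, …, v_M`. -/
theorem stmt2 (b₁ b₂ q : ℝ) (hb₁ : 0 < b₁) (hb₁₂ : b₁ < b₂) (hb₂ : b₂ < 1)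
    (hq : q = b₁ / b₂) (M : ℕ) (hM : 1 ≤ M) (ks : List (Fin M)) :
    ∃ lam : Fin (M + 1) → ℝ, (∀ i, 0 ≤ lam i) ∧ (∑ i, lam i = 1) ∧
      (ks.map (sixP b₁ b₂ M)).prod.mulVec (sixV q M 0) = ∑ i, lam i • sixV q M i := by
  induction ks with
  | nil =>
    refine ⟨fun i => if i = 0 then 1 else 0, fun i => by positivity, by simp, ?_⟩
    simp only [List.map_nil, List.prod_nil, Matrix.one_mulVec]
    rw [six_sum_single_smul]
  | cons a l ih =>
    obtain ⟨lam, hl0, hl1, hl2⟩ := ih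
    refine ⟨fun m => ∑ i, lam i * sixC b₁ b₂ M a i m, ?_, ?_, ?_⟩
    · intro m
      exact Finset.sum_nonneg fun i _ =>
        mul_nonneg (hl0 i) (sixC_nonneg b₁ b₂ hb₁ hb₁₂ hb₂ M a i m)
    · rw [Finset.sum_comm]
      calc ∑ i, ∑ m, lam i * sixC b₁ b₂ M a i m
          = ∑ i : Fin (M + 1), lam i * 1 := by
            refine Finset.sum_congr rfl fun i _ => ?_
            rw [← Finset.mul_sum, sixC_sum]
        _ = 1 := by simpa using hl1
    · rw [List.map_cons, List.prod_cons, ← Matrix.mulVec_mulVec, hl2]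
      have hlin : (sixP b₁ b₂ M a).mulVec (∑ i, lam i • sixV q M i) =
          ∑ i, lam i • (sixP b₁ b₂ M a).mulVec (sixV q M i) := by
        rw [show (sixP b₁ b₂ M a).mulVec (∑ i, lam i • sixV q M i) =
            (sixP b₁ b₂ M a).mulVecLin (∑ i, lam i • sixV q M i) from rfl,
          map_sum]
        simp [Matrix.mulVecLin]
      rw [hlin]
      have hstep : ∀ i : Fin (M + 1), lam i • (sixP b₁ b₂ M a).mulVec (sixV q M i) =
          ∑ m, (lam i * sixC b₁ b₂ M a i m) • sixV q M m := by
        intro i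
        rw [sixStepV b₁ b₂ q hb₁ hb₁₂ hb₂ hq M a i, Finset.smul_sum]
        simp [smul_smul]
      simp only [hstep]
      rw [Finset.sum_comm]
      refine Finset.sum_congr rfl fun m _ => ?_
      rw [← Finset.sum_smul]
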